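/- Let 0 ≤ k ≤ 1, 0 ≤ λ < 1 with (1-k²)λ²/(1-λ²) < 1, and ν > -1. Then for every positive integer N, the remainder R_N = Σ_{j=N}^{∞} (-1)^j ((1/2)_j/j!) (1-k²)^j ∫_0^λ t^{2j}/((1+νt²)(1-t²)^{j+1}) dt satisfies |R_N| ≤ ((1/2)_N λ)/(2 min(1,1+ν) N N!) · [(1-k²)λ²/(1-λ²)]^N. -/

import Mathlib

open Finset intervalIntegral Real

noncomputable def poch (a : ℝ) (k : ℕ) : ℝ := ∏ i ∈ Finset.range k, (a + i)

noncomputable def auxI (ν lam : ℝ) (m : ℕ) : ℝ :=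
  ∫ t in (0:ℝ)..lam, t ^ (2 * m) / ((1 + ν * t ^ 2) * (1 - t ^ 2) ^ (m + 1))

section aux
variable {lam ν : ℝ} (hlam0 : 0 ≤ lam) (hlam1 : lam < 1) (hν : -1 < ν)

lemma hmu_pos (hν : -1 < ν) : (0:ℝ) < min 1 (1 + ν) := lt_min one_pos (by linarith)

lemma hpt (hν : -1 < ν) {t : ℝ} (ht : t ∈ Set.Icc 0 lam) (hlam1 : lam < 1) :
    min 1 (1 + ν) ≤ 1 + ν * t ^ 2 ∧ 0 < 1 - t ^ 2 ∧ t ^ 2 ≤ lam ^ 2 := by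
  obtain ⟨ht0, ht1⟩ := ht
  have ht2 : t ^ 2 ≤ lam ^ 2 := by nlinarith
  have htl1 : t ^ 2 ≤ 1 := by nlinarith
  refine ⟨?_, by nlinarith, ht2⟩
  rcases le_or_gt 0 ν with h | h
  · exact le_trans (min_le_left _ _) (by nlinarith)
  · exact le_trans (min_le_right _ _) (by nlinarith)

lemma hcontI (hlam1 : lam < 1) (hν : -1 < ν) (m : ℕ) :
    ContinuousOn (fun t : ℝ => t ^ (2 * m) / ((1 + ν * t ^ 2) * (1 - t ^ 2) ^ (m + 1)))
      (Set.Icc 0 lam) := by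
  apply ContinuousOn.div (by fun_prop) (by fun_prop)
  intro t ht
  obtain ⟨h1, h2, _⟩ := hpt hν ht hlam1
  have hp := lt_of_lt_of_le (hmu_pos hν) h1
  exact ne_of_gt (mul_pos hp (pow_pos h2 _))

lemma hintI (hlam0 : 0 ≤ lam) (hlam1 : lam < 1) (hν : -1 < ν) (m : ℕ) :
    IntervalIntegrable (fun t : ℝ => t ^ (2 * m) / ((1 + ν * t ^ 2) * (1 - t ^ 2) ^ (m + 1)))
      MeasureTheory.volume 0 lam := by
  have h := hcontI hlam1 hν m
  rw [← Set.uIcc_of_le hlam0] at h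
  exact h.intervalIntegrable

lemma auxI_nonneg (hlam0 : 0 ≤ lam) (hlam1 : lam < 1) (hν : -1 < ν) (m : ℕ) :
    0 ≤ auxI ν lam m := by
  apply intervalIntegral.integral_nonneg hlam0
  intro t ht
  obtain ⟨h1, h2, _⟩ := hpt hν ht hlam1
  have hp := lt_of_lt_of_le (hmu_pos hν) h1
  exact div_nonneg (pow_nonneg ht.1 _) (le_of_lt (mul_pos hp (pow_pos h2 _)))

lemma auxI_ratio (hlam0 : 0 ≤ lam) (hlam1 : lam < 1) (hν : -1 < ν) (m : ℕ) :
    auxI ν lam (m + 1) ≤ lam ^ 2 / (1 - lam ^ 2) * auxI ν lam m := by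
  have h1l : (0:ℝ) < 1 - lam ^ 2 := by nlinarith
  have key : auxI ν lam (m + 1) ≤ ∫ t in (0:ℝ)..lam,
      lam ^ 2 / (1 - lam ^ 2) * (t ^ (2 * m) / ((1 + ν * t ^ 2) * (1 - t ^ 2) ^ (m + 1))) := by
    apply intervalIntegral.integral_mono_on hlam0 (hintI hlam0 hlam1 hν (m+1))
      ((hintI hlam0 hlam1 hν m).const_mul _)
    intro t ht
    obtain ⟨h1, h2, h3⟩ := hpt hν ht hlam1
    have hμ := lt_of_lt_of_le (hmu_pos hν) h1
    have heq : t ^ (2 * (m+1)) / ((1 + ν * t ^ 2) * (1 - t ^ 2) ^ (m + 1 + 1))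
        = t ^ 2 / (1 - t ^ 2) * (t ^ (2 * m) / ((1 + ν * t ^ 2) * (1 - t ^ 2) ^ (m + 1))) := by
      field_simp
      ring
    rw [heq]
    have hle : t ^ 2 / (1 - t ^ 2) ≤ lam ^ 2 / (1 - lam ^ 2) :=
      div_le_div₀ (by positivity) h3 h1l (by nlinarith)
    have hnn : 0 ≤ t ^ (2 * m) / ((1 + ν * t ^ 2) * (1 - t ^ 2) ^ (m + 1)) :=
      div_nonneg (pow_nonneg ht.1 _) (le_of_lt (mul_pos hμ (pow_pos h2 _)))
    exact mul_le_mul_of_nonneg_right hle hnn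
  rwa [intervalIntegral.integral_const_mul] at key

end aux
section ftc
variable {lam ν : ℝ}

lemma auxI_head_bound (hlam0 : 0 ≤ lam) (hlam1 : lam < 1) (hν : -1 < ν) (N : ℕ) (hN : 1 ≤ N) :
    auxI ν lam N ≤ lam / (2 * min 1 (1 + ν) * N) * (lam ^ 2 / (1 - lam ^ 2)) ^ N := by
  obtain ⟨M, rfl⟩ : ∃ M, N = M + 1 := ⟨N - 1, by omega⟩
  have h1l : (0:ℝ) < 1 - lam ^ 2 := by nlinarith
  have hμ := hmu_pos (ν := ν) hν
  set μ := min 1 (1 + ν) with hμdef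
  -- derivative fact
  have hG : ∀ t ∈ Set.uIcc (0:ℝ) lam,
      HasDerivAt (fun t : ℝ => 1 / (2 * (M + 1 : ℕ)) * (t ^ 2 / (1 - t ^ 2)) ^ (M + 1))
        (t ^ (2 * M + 1) / (1 - t ^ 2) ^ (M + 2)) t := by
    intro t ht
    rw [Set.uIcc_of_le hlam0] at ht
    obtain ⟨_, h2, _⟩ := hpt hν ht hlam1
    have hne : (1 : ℝ) - t ^ 2 ≠ 0 := ne_of_gt h2
    have h1 : HasDerivAt (fun t : ℝ => t ^ 2) (2 * t) t := by
      simpa using hasDerivAt_pow 2 t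
    have h2' : HasDerivAt (fun t : ℝ => 1 - t ^ 2) (0 - 2 * t) t :=
      (hasDerivAt_const t (1:ℝ)).sub h1
    have h3 : HasDerivAt (fun t : ℝ => (t ^ 2 / (1 - t ^ 2)) ^ (M + 1))
        (((M + 1 : ℕ) : ℝ) * (t ^ 2 / (1 - t ^ 2)) ^ (M + 1 - 1) *
          ((2 * t * (1 - t ^ 2) - t ^ 2 * (0 - 2 * t)) / (1 - t ^ 2) ^ 2)) t :=
      (h1.div h2' hne).pow (M + 1)
    have h4 := h3.const_mul (1 / (2 * (M + 1 : ℕ)) : ℝ)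
    refine h4.congr_deriv ?_
    symm
    simp only [Nat.add_sub_cancel]
    rw [div_pow]
    push_cast
    field_simp
    ring
  -- continuity of the derivative
  have hcd : IntervalIntegrable (fun t : ℝ => t ^ (2 * M + 1) / (1 - t ^ 2) ^ (M + 2))
      MeasureTheory.volume 0 lam := by
    apply ContinuousOn.intervalIntegrable
    apply ContinuousOn.div (by fun_prop) (by fun_prop)
    intro t ht
    rw [Set.uIcc_of_le hlam0] at ht
    obtain ⟨_, h2, _⟩ := hpt hν ht hlam1
    exact pow_ne_zero _ (ne_of_gt h2)
  have heval : (∫ t in (0:ℝ)..lam, t ^ (2 * M + 1) / (1 - t ^ 2) ^ (M + 2))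
      = 1 / (2 * (M + 1 : ℕ)) * (lam ^ 2 / (1 - lam ^ 2)) ^ (M + 1) := by
    rw [intervalIntegral.integral_eq_sub_of_hasDerivAt hG hcd]
    norm_num [zero_pow]
  -- pointwise bound for auxI
  have hmono : auxI ν lam (M + 1) ≤ ∫ t in (0:ℝ)..lam,
      lam / μ * (t ^ (2 * M + 1) / (1 - t ^ 2) ^ (M + 2)) := by
    apply intervalIntegral.integral_mono_on hlam0 (hintI hlam0 hlam1 hν (M + 1))
      (hcd.const_mul _)
    intro t ht
    obtain ⟨h1, h2, h3⟩ := hpt hν ht hlam1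
    have step1 : t ^ (2 * (M + 1)) / ((1 + ν * t ^ 2) * (1 - t ^ 2) ^ (M + 1 + 1))
        ≤ (lam * t ^ (2 * M + 1)) / (μ * (1 - t ^ 2) ^ (M + 2)) := by
      apply div_le_div₀ (mul_nonneg hlam0 (pow_nonneg ht.1 _))
      · rw [show 2 * (M + 1) = 2 * M + 1 + 1 by ring, pow_succ]
        exact mul_le_mul_of_nonneg_left ht.2 (pow_nonneg ht.1 _) |>.trans_eq (mul_comm _ _)
      · exact mul_pos hμ (pow_pos h2 _)
      · exact mul_le_mul_of_nonneg_right h1 (le_of_lt (pow_pos h2 _))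
    calc t ^ (2 * (M + 1)) / ((1 + ν * t ^ 2) * (1 - t ^ 2) ^ (M + 1 + 1))
        ≤ (lam * t ^ (2 * M + 1)) / (μ * (1 - t ^ 2) ^ (M + 2)) := step1
      _ = lam / μ * (t ^ (2 * M + 1) / (1 - t ^ 2) ^ (M + 2)) := by
          rw [div_mul_div_comm]
  rw [intervalIntegral.integral_const_mul, heval] at hmono
  calc auxI ν lam (M + 1) ≤ lam / μ * (1 / (2 * (M + 1 : ℕ)) * (lam ^ 2 / (1 - lam ^ 2)) ^ (M + 1)) := hmono
    _ = lam / (2 * μ * (M + 1 : ℕ)) * (lam ^ 2 / (1 - lam ^ 2)) ^ (M + 1) := by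
        rw [← mul_assoc]
        congr 1
        have hμ' : μ ≠ 0 := ne_of_gt hμ
        have hM : ((M:ℝ) + 1) ≠ 0 := by positivity
        push_cast
        field_simp

end ftc
noncomputable def auxB (k lam ν : ℝ) (m : ℕ) : ℝ :=
  poch (1/2) m / (Nat.factorial m) * (1 - k ^ 2) ^ m * auxI ν lam m

lemma poch_half_pos (m : ℕ) : 0 < poch (1/2) m :=
  Finset.prod_pos fun i _ => by positivity

section bb
variable {k lam ν : ℝ}

lemma auxB_nonneg (hk2 : 0 ≤ 1 - k ^ 2) (hlam0 : 0 ≤ lam) (hlam1 : lam < 1) (hν : -1 < ν)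
    (m : ℕ) : 0 ≤ auxB k lam ν m :=
  mul_nonneg (mul_nonneg (div_nonneg (poch_half_pos m).le (Nat.cast_nonneg _))
    (pow_nonneg hk2 m)) (auxI_nonneg hlam0 hlam1 hν m)

lemma auxB_ratio (hk2 : 0 ≤ 1 - k ^ 2) (hlam0 : 0 ≤ lam) (hlam1 : lam < 1) (hν : -1 < ν)
    (m : ℕ) :
    auxB k lam ν (m + 1) ≤ (1 - k ^ 2) * lam ^ 2 / (1 - lam ^ 2) * auxB k lam ν m := by
  have h1l : (0:ℝ) < 1 - lam ^ 2 := by nlinarith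
  have hc0 : (0:ℝ) ≤ lam ^ 2 / (1 - lam ^ 2) := by positivity
  have hpq : poch (1/2) (m+1) / (Nat.factorial (m+1) : ℝ)
      ≤ poch (1/2) m / (Nat.factorial m : ℝ) := by
    have hfac : (0:ℝ) < Nat.factorial m := by positivity
    have h1 : poch (1/2) (m+1) / (Nat.factorial (m+1) : ℝ)
        = poch (1/2) m / (Nat.factorial m : ℝ) * ((1/2 + m) / (m + 1)) := by
      rw [div_mul_div_comm, div_eq_div_iff (by positivity) (by positivity)]
      rw [poch, Finset.prod_range_succ, ← poch, Nat.factorial_succ]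
      push_cast
      ring
    rw [h1]
    have h2 : (1/2 + (m:ℝ)) / ((m:ℝ) + 1) ≤ 1 := by
      rw [div_le_one (by positivity)]; linarith
    exact mul_le_of_le_one_right (div_nonneg (poch_half_pos m).le (Nat.cast_nonneg _)) h2
  have hnnI := auxI_nonneg (lam := lam) (ν := ν) hlam0 hlam1 hν m
  calc auxB k lam ν (m + 1)
      = poch (1/2) (m+1) / (Nat.factorial (m+1) : ℝ) * (1 - k ^ 2) ^ (m+1)
        * auxI ν lam (m+1) := rfl
    _ ≤ poch (1/2) (m+1) / (Nat.factorial (m+1) : ℝ) * (1 - k ^ 2) ^ (m+1)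
        * (lam ^ 2 / (1 - lam ^ 2) * auxI ν lam m) :=
        mul_le_mul_of_nonneg_left (auxI_ratio hlam0 hlam1 hν m)
          (mul_nonneg (div_nonneg (poch_half_pos _).le (Nat.cast_nonneg _))
            (pow_nonneg hk2 _))
    _ ≤ poch (1/2) m / (Nat.factorial m : ℝ) * (1 - k ^ 2) ^ (m+1)
        * (lam ^ 2 / (1 - lam ^ 2) * auxI ν lam m) := by
        apply mul_le_mul_of_nonneg_right (mul_le_mul_of_nonneg_right hpq (pow_nonneg hk2 _))
        exact mul_nonneg hc0 hnnI
    _ = (1 - k ^ 2) * lam ^ 2 / (1 - lam ^ 2) * auxB k lam ν m := by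
        rw [auxB]; ring

end bb

theorem remainder_bound_region_one (k lam ν : ℝ) (hk0 : 0 ≤ k) (hk1 : k ≤ 1)
    (hlam0 : 0 ≤ lam) (hlam1 : lam < 1)
    (hreg : (1 - k ^ 2) * lam ^ 2 / (1 - lam ^ 2) < 1)
    (hν : -1 < ν) (N : ℕ) (hN : 1 ≤ N) :
    |∑' j : ℕ, (-1 : ℝ) ^ (j + N) * (poch (1 / 2) (j + N) / (Nat.factorial (j + N))) *
        (1 - k ^ 2) ^ (j + N) *
        ∫ t in (0 : ℝ)..lam,
          t ^ (2 * (j + N)) / ((1 + ν * t ^ 2) * (1 - t ^ 2) ^ (j + N + 1))| ≤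
      poch (1 / 2) N * lam / (2 * min 1 (1 + ν) * N * (Nat.factorial N)) *
        ((1 - k ^ 2) * lam ^ 2 / (1 - lam ^ 2)) ^ N := by
  have h1l : (0:ℝ) < 1 - lam ^ 2 := by nlinarith
  have hk2 : (0:ℝ) ≤ 1 - k ^ 2 := by nlinarith
  set r := (1 - k ^ 2) * lam ^ 2 / (1 - lam ^ 2) with hrdef
  have hr0 : 0 ≤ r := div_nonneg (mul_nonneg hk2 (sq_nonneg lam)) h1l.le
  have hr1 : r < 1 := hreg
  set f : ℕ → ℝ := fun i => auxB k lam ν (i + N) with hfdef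
  have hf0 : ∀ i, 0 ≤ f i := fun i => auxB_nonneg hk2 hlam0 hlam1 hν _
  -- rewrite each term of the series
  have hterm : ∀ j : ℕ, (-1 : ℝ) ^ (j + N) * (poch (1 / 2) (j + N) / (Nat.factorial (j + N))) *
      (1 - k ^ 2) ^ (j + N) *
      (∫ t in (0 : ℝ)..lam,
        t ^ (2 * (j + N)) / ((1 + ν * t ^ 2) * (1 - t ^ 2) ^ (j + N + 1)))
      = (-1 : ℝ) ^ N * ((-1 : ℝ) ^ j * f j) := by
    intro j
    simp only [hfdef, auxB, auxI]
    ring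
  rw [tsum_congr hterm, tsum_mul_left, abs_mul, abs_pow, abs_neg, abs_one, one_pow, one_mul]
  -- antitonicity
  have hstep : ∀ i, f (i + 1) ≤ r * f i := by
    intro i
    have : (i + 1) + N = (i + N) + 1 := by omega
    rw [hfdef]
    simp only [this]
    exact auxB_ratio hk2 hlam0 hlam1 hν (i + N)
  have hfa : Antitone f := by
    apply antitone_nat_of_succ_le
    intro i
    calc f (i + 1) ≤ r * f i := hstep i
      _ ≤ 1 * f i := mul_le_mul_of_nonneg_right hr1.le (hf0 i)
      _ = f i := one_mul _
  -- geometric domination and summability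
  have hgeom : ∀ j, f j ≤ f 0 * r ^ j := by
    intro j
    induction j with
    | zero => simp
    | succ j ih =>
      calc f (j + 1) ≤ r * f j := hstep j
        _ ≤ r * (f 0 * r ^ j) := mul_le_mul_of_nonneg_left ih hr0
        _ = f 0 * r ^ (j + 1) := by ring
  have hsum : Summable (fun j => (-1 : ℝ) ^ j * f j) := by
    apply Summable.of_abs
    have : (fun j => |(-1 : ℝ) ^ j * f j|) = fun j => f j := by
      funext j
      rw [abs_mul, abs_pow, abs_neg, abs_one, one_pow, one_mul, abs_of_nonneg (hf0 j)]
    rw [this]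
    exact Summable.of_nonneg_of_le hf0 hgeom
      ((summable_geometric_of_lt_one hr0 hr1).mul_left (f 0))
  have htend := hsum.hasSum.tendsto_sum_nat
  have hup := hfa.tendsto_le_alternating_series htend 0
  have hlo := hfa.alternating_series_le_tendsto htend 0
  simp only [Nat.mul_zero, Nat.zero_add, Finset.range_one, Finset.sum_singleton, pow_zero,
    one_mul, Finset.range_zero, Finset.sum_empty] at hup hlo
  have habs : |∑' j, (-1 : ℝ) ^ j * f j| ≤ f 0 := abs_le.mpr ⟨by linarith [hf0 0], hup⟩
  refine le_trans habs ?_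
  -- final bound on f 0 = auxB N
  have hf0eq : f 0 = poch (1/2) N / (Nat.factorial N : ℝ) * (1 - k ^ 2) ^ N * auxI ν lam N := by
    simp [hfdef, auxB]
  rw [hf0eq]
  have hhead := auxI_head_bound (lam := lam) (ν := ν) hlam0 hlam1 hν N hN
  calc poch (1/2) N / (Nat.factorial N : ℝ) * (1 - k ^ 2) ^ N * auxI ν lam N
      ≤ poch (1/2) N / (Nat.factorial N : ℝ) * (1 - k ^ 2) ^ N *
        (lam / (2 * min 1 (1 + ν) * N) * (lam ^ 2 / (1 - lam ^ 2)) ^ N) :=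
        mul_le_mul_of_nonneg_left hhead
          (mul_nonneg (div_nonneg (poch_half_pos _).le (Nat.cast_nonneg _)) (pow_nonneg hk2 _))
    _ = poch (1 / 2) N * lam / (2 * min 1 (1 + ν) * N * (Nat.factorial N)) * r ^ N := by
        rw [hrdef, show (1 - k ^ 2) * lam ^ 2 / (1 - lam ^ 2)
            = (1 - k ^ 2) * (lam ^ 2 / (1 - lam ^ 2)) from mul_div_assoc _ _ _, mul_pow]
        ring
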